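/- For every ε > 0 there exists n0 ∈ ℕ such that for all integers n ≥ n0, the poset Ramsey number satisfies R(Λ, Q_n) ≤ n + (1+ε)·(n / log n). -/

import Mathlib

/-- The three-element poset `Λ` with elements `Z1, Z2, Z3` where `Z1 < Z3`, `Z2 < Z3`,
and `Z1`, `Z2` incomparable. (The poset `V` is its order dual `Lamᵒᵈ`.) -/
inductive Lam : Type where
  | Z1 : Lam
  | Z2 : Lam
  | Z3 : Lam
  deriving DecidableEq

/-- The order relation of `Λ` as a Boolean-valued function. -/
def Lam.ble : Lam → Lam → Bool
  | .Z1, .Z1 => true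
  | .Z2, .Z2 => true
  | .Z1, .Z3 => true
  | .Z2, .Z3 => true
  | .Z3, .Z3 => true
  | _, _ => false

instance : PartialOrder Lam where
  le a b := Lam.ble a b = true
  le_refl a := by cases a <;> rfl
  le_trans a b c hab hbc := by
    cases a <;> cases b <;> cases c <;> simp_all [Lam.ble]
  le_antisymm a b hab hba := by
    cases a <;> cases b <;> simp_all [Lam.ble]

/-- `P'` contains a copy of `P`: there is an injective map `f : P → P'` such that
`x ≤ y` iff `f x ≤ f y`. -/
def ContainsCopy (P P' : Type*) [PartialOrder P] [PartialOrder P'] : Prop :=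
  ∃ f : P → P', Function.Injective f ∧ ∀ x y : P, x ≤ y ↔ f x ≤ f y

/-- The blue/red colored Boolean lattice `Q_N` (with coloring `c`, blue = `true`,
red = `false`) contains a blue copy of the poset `P`. -/
def HasBlueCopy (P : Type*) [PartialOrder P] {N : ℕ} (c : Finset (Fin N) → Bool) : Prop :=
  ∃ f : P → Finset (Fin N), Function.Injective f ∧
    (∀ x y : P, x ≤ y ↔ f x ⊆ f y) ∧ ∀ x : P, c (f x) = true

/-- The blue/red colored Boolean lattice `Q_N` contains a red copy of
the Boolean lattice `Q_n`. -/
def HasRedCube (n : ℕ) {N : ℕ} (c : Finset (Fin N) → Bool) : Prop :=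
  ∃ f : Finset (Fin n) → Finset (Fin N), Function.Injective f ∧
    (∀ A B : Finset (Fin n), A ⊆ B ↔ f A ⊆ f B) ∧ ∀ A : Finset (Fin n), c (f A) = false

/-- The poset Ramsey number `R(P, Q_n)`: the least `N` such that every blue/red coloring
of `Q_N` contains a blue copy of `P` or a red copy of `Q_n`. -/
noncomputable def posetRamsey (P : Type*) [PartialOrder P] (n : ℕ) : ℕ :=
  sInf {N : ℕ | ∀ c : Finset (Fin N) → Bool, HasBlueCopy P c ∨ HasRedCube n c}

section AuxAW
open Finset

lemma lam_le_iff (a b : Lam) : a ≤ b ↔ Lam.ble a b = true := Iff.rfl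

lemma comp_of_no_blue {N : ℕ} {c : Finset (Fin N) → Bool} (hB : ¬ HasBlueCopy Lam c)
    {X Y Z : Finset (Fin N)} (hX : c X = true) (hY : c Y = true) (hZ : c Z = true)
    (hXZ : X ⊆ Z) (hYZ : Y ⊆ Z) : X ⊆ Y ∨ Y ⊆ X := by
  by_contra hcon
  push_neg at hcon
  obtain ⟨h1, h2⟩ := hcon
  have hZX : ¬ Z ⊆ X := fun h => h2 (hYZ.trans h)
  have hZY : ¬ Z ⊆ Y := fun h => h1 (hXZ.trans h)
  apply hB
  refine ⟨fun z => match z with | .Z1 => X | .Z2 => Y | .Z3 => Z, ?_, ?_, ?_⟩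
  · intro a b hab
    cases a <;> cases b <;> simp_all <;>
      first
        | rfl
        | (exfalso; first
            | exact h1 (by rw [hab])
            | exact h2 (by rw [hab])
            | exact hZX (by rw [hab])
            | exact hZY (by rw [hab]))
  · intro a b
    cases a <;> cases b <;>
      simp_all [lam_le_iff, Lam.ble, Finset.Subset.refl]
  · intro a; cases a <;> assumption

def embLow (n k : ℕ) (A : Finset (Fin n)) : Finset (Fin (n+k)) := A.map (Fin.castAddEmb k)

def chainSet (n k : ℕ) (σ : Equiv.Perm (Fin k)) (i : ℕ) : Finset (Fin (n+k)) :=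
  ((Finset.univ.filter (fun m : Fin k => (m:ℕ) < i)).image σ).map (Fin.natAddEmb n)

lemma mem_embLow_lt {n k : ℕ} {A : Finset (Fin n)} {x : Fin (n+k)} (hx : x ∈ embLow n k A) :
    (x:ℕ) < n := by
  simp only [embLow, mem_map] at hx
  obtain ⟨a, _, rfl⟩ := hx
  simpa using a.isLt

lemma mem_chainSet_le {n k : ℕ} {σ : Equiv.Perm (Fin k)} {i : ℕ} {x : Fin (n+k)}
    (hx : x ∈ chainSet n k σ i) : n ≤ (x:ℕ) := by
  simp only [chainSet, mem_map] at hx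
  obtain ⟨a, _, rfl⟩ := hx
  exact Nat.le_add_right _ _

lemma chainSet_mono {n k : ℕ} (σ : Equiv.Perm (Fin k)) {i j : ℕ} (h : i ≤ j) :
    chainSet n k σ i ⊆ chainSet n k σ j := by
  apply Finset.map_subset_map.2
  apply Finset.image_subset_image
  intro m hm
  simp only [mem_filter] at hm ⊢
  exact ⟨hm.1, lt_of_lt_of_le hm.2 h⟩

lemma chainSet_top {n k : ℕ} (σ : Equiv.Perm (Fin k)) :
    chainSet n k σ k = Finset.univ.map (Fin.natAddEmb n) := by
  unfold chainSet
  congr 1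
  rw [Finset.filter_true_of_mem (fun m _ => m.isLt)]
  exact Finset.image_univ_equiv σ

lemma card_chainSet {n k : ℕ} (σ : Equiv.Perm (Fin k)) (i : ℕ) :
    (chainSet n k σ i).card = (Finset.univ.filter (fun m : Fin k => (m:ℕ) < i)).card := by
  rw [chainSet, Finset.card_map, Finset.card_image_of_injective _ σ.injective]

lemma union_subset_parts {n k : ℕ} {A B : Finset (Fin n)} {σ σ' : Equiv.Perm (Fin k)} {i j : ℕ}
    (h : embLow n k A ∪ chainSet n k σ i ⊆ embLow n k B ∪ chainSet n k σ' j) :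
    A ⊆ B ∧ chainSet n k σ i ⊆ chainSet n k σ' j := by
  constructor
  · intro a ha
    have hx : (Fin.castAddEmb k a) ∈ embLow n k B ∪ chainSet n k σ' j :=
      h (Finset.mem_union_left _ (Finset.mem_map_of_mem _ ha))
    rcases Finset.mem_union.1 hx with hx | hx
    · simp only [embLow, Finset.mem_map] at hx
      obtain ⟨b, hb, hba⟩ := hx
      rwa [(Fin.castAddEmb k).injective hba] at hb
    · exact absurd (mem_chainSet_le hx) (by simp)
  · intro x hx
    have hx' := h (Finset.mem_union_right _ hx)
    rcases Finset.mem_union.1 hx' with hx' | hx'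
    · exact absurd (mem_embLow_lt hx') (by simpa using mem_chainSet_le hx)
    · exact hx'
def BTrans (n k : ℕ) (σ : Equiv.Perm (Fin k)) (c : Finset (Fin (n+k)) → Bool) : Prop :=
  ∃ s : ℕ → Finset (Fin n), (∀ i, s i ⊆ s (i+1)) ∧
    ∀ i ≤ k, c (embLow n k (s i) ∪ chainSet n k σ i) = true

/-- A blue witness chain of height `j` below `T`. -/
def Wit (n k : ℕ) (σ : Equiv.Perm (Fin k)) (c : Finset (Fin (n+k)) → Bool)
    (T : Finset (Fin n)) (j : ℕ) : Prop :=
  ∃ s : ℕ → Finset (Fin n), (∀ i, s i ⊆ s (i+1)) ∧ (∀ i < j, s i ⊆ T) ∧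
    ∀ i < j, c (embLow n k (s i) ∪ chainSet n k σ i) = true

open scoped Classical in
noncomputable def wfn (n k : ℕ) (σ : Equiv.Perm (Fin k)) (c : Finset (Fin (n+k)) → Bool)
    (T : Finset (Fin n)) : ℕ :=
  Nat.findGreatest (Wit n k σ c T) k

section wfacts
open scoped Classical
variable {n k : ℕ} {σ : Equiv.Perm (Fin k)} {c : Finset (Fin (n+k)) → Bool}

lemma wit_zero (T : Finset (Fin n)) : Wit n k σ c T 0 :=
  ⟨fun _ => ∅, fun _ => Finset.Subset.refl _, fun i hi => absurd hi (Nat.not_lt_zero i),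
    fun i hi => absurd hi (Nat.not_lt_zero i)⟩

lemma wit_mono {T T' : Finset (Fin n)} (hT : T ⊆ T') {j : ℕ} (h : Wit n k σ c T j) :
    Wit n k σ c T' j := by
  obtain ⟨s, h1, h2, h3⟩ := h
  exact ⟨s, h1, fun i hi => (h2 i hi).trans hT, h3⟩

lemma wfn_le (T : Finset (Fin n)) : wfn n k σ c T ≤ k := Nat.findGreatest_le k

lemma wit_wfn (T : Finset (Fin n)) : Wit n k σ c T (wfn n k σ c T) :=
  Nat.findGreatest_spec (Nat.zero_le k) (wit_zero T)

lemma wfn_mono {T T' : Finset (Fin n)} (hT : T ⊆ T') : wfn n k σ c T ≤ wfn n k σ c T' :=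
  Nat.le_findGreatest (wfn_le T) (wit_mono hT (wit_wfn T))

lemma wfn_red (hσ : ¬ BTrans n k σ c) (T : Finset (Fin n)) :
    c (embLow n k T ∪ chainSet n k σ (wfn n k σ c T)) = false := by
  set w := wfn n k σ c T with hw
  by_contra hblue
  rw [Bool.not_eq_false] at hblue
  obtain ⟨s, h1, h2, h3⟩ := wit_wfn (σ := σ) (c := c) T
  set s' : ℕ → Finset (Fin n) := fun i => if i < w then s i else T with hs'
  have hmono : ∀ i, s' i ⊆ s' (i+1) := by
    intro i
    simp only [hs']
    by_cases hi : i < w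
    · by_cases hi1 : i + 1 < w
      · simp [hi, hi1, h1 i]
      · simp [hi, hi1, h2 i hi]
    · have : ¬ i + 1 < w := fun h => hi (Nat.lt_of_succ_lt h)
      simp [hi, this]
  have hsub : ∀ i < w + 1, s' i ⊆ T := by
    intro i hi
    simp only [hs']
    by_cases hiw : i < w
    · simp [hiw, h2 i hiw]
    · simp [hiw]
  have hblue' : ∀ i < w + 1, c (embLow n k (s' i) ∪ chainSet n k σ i) = true := by
    intro i hi
    rcases Nat.lt_succ_iff_lt_or_eq.1 hi with hi | rfl
    · simpa only [hs', if_pos hi] using h3 i hi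
    · simpa only [hs', lt_irrefl, if_neg (lt_irrefl w)] using hblue
  have hwit : Wit n k σ c T (w + 1) := ⟨s', hmono, hsub, hblue'⟩
  rcases Nat.lt_or_ge w k with hwk | hwk
  · have h4 : w + 1 ≤ w := Nat.le_findGreatest (Nat.succ_le_of_lt hwk) hwit
    omega
  · have hwk' : w = k := le_antisymm (wfn_le T) hwk
    apply hσ
    refine ⟨s', hmono, fun i hi => hblue' i ?_⟩
    omega

end wfacts

lemma redcube {n k : ℕ} {σ : Equiv.Perm (Fin k)} {c : Finset (Fin (n+k)) → Bool}
    (hσ : ¬ BTrans n k σ c) : HasRedCube n c := by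
  refine ⟨fun A => embLow n k A ∪ chainSet n k σ (wfn n k σ c A), ?_, ?_, fun A => wfn_red hσ A⟩
  · intro A B hAB
    have h1 := union_subset_parts (hAB.le)
    have h2 := union_subset_parts (hAB.ge)
    exact Finset.Subset.antisymm h1.1 h2.1
  · intro A B
    constructor
    · intro h
      exact Finset.union_subset_union (Finset.map_subset_map.2 h)
        (chainSet_mono σ (wfn_mono h))
    · intro h
      exact (union_subset_parts h).1

lemma key (n k : ℕ) (hk : 2^n < k.factorial) (c : Finset (Fin (n+k)) → Bool) :
    HasBlueCopy Lam c ∨ HasRedCube n c := by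
  by_cases hB : HasBlueCopy Lam c
  · exact Or.inl hB
  right
  by_cases hT : ∀ σ : Equiv.Perm (Fin k), BTrans n k σ c
  · exfalso
    choose s hmono hblue using hT
    have hsub : ∀ (τ : Equiv.Perm (Fin k)) (i : ℕ), i ≤ k → s τ i ⊆ s τ k := by
      intro τ i hik
      exact monotone_nat_of_le_succ (f := s τ) (fun j => Finset.le_iff_subset.2 (hmono τ j)) hik
    have hinj : Function.Injective (fun σ => s σ k) := by
      intro σ σ' hq
      simp only at hq
      have hZ' : embLow n k (s σ' k) ∪ chainSet n k σ' k
          = embLow n k (s σ k) ∪ chainSet n k σ k := by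
        rw [hq, chainSet_top, chainSet_top]
      have hZblue : c (embLow n k (s σ k) ∪ chainSet n k σ k) = true := hblue σ k le_rfl
      have hcomp : ∀ i, i ≤ k → chainSet n k σ i = chainSet n k σ' i := by
        intro i hik
        have hXi := hblue σ i hik
        have hXi' := hblue σ' i hik
        have hXZ : embLow n k (s σ i) ∪ chainSet n k σ i
            ⊆ embLow n k (s σ k) ∪ chainSet n k σ k :=
          Finset.union_subset_union (Finset.map_subset_map.2 (hsub σ i hik))
            (chainSet_mono σ hik)
        have hXZ' : embLow n k (s σ' i) ∪ chainSet n k σ' i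
            ⊆ embLow n k (s σ k) ∪ chainSet n k σ k := by
          rw [← hZ']
          exact Finset.union_subset_union (Finset.map_subset_map.2 (hsub σ' i hik))
            (chainSet_mono σ' hik)
        rcases comp_of_no_blue hB hXi hXi' hZblue hXZ hXZ' with h | h
        · exact Finset.eq_of_subset_of_card_le (union_subset_parts h).2
            (by rw [card_chainSet, card_chainSet])
        · exact (Finset.eq_of_subset_of_card_le (union_subset_parts h).2
            (by rw [card_chainSet, card_chainSet])).symm
      have heq : ∀ i, i ≤ k →
          (Finset.univ.filter (fun m : Fin k => (m:ℕ) < i)).image σ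
            = (Finset.univ.filter (fun m : Fin k => (m:ℕ) < i)).image σ' := by
        intro i hik
        have h := hcomp i hik
        unfold chainSet at h
        exact Finset.map_injective _ h
      apply Equiv.ext
      intro m
      have hm1 : (m:ℕ) + 1 ≤ k := m.isLt
      have h1 : σ m ∈ (Finset.univ.filter (fun m' : Fin k => (m':ℕ) < (m:ℕ)+1)).image σ' := by
        rw [← heq _ hm1]
        exact Finset.mem_image_of_mem σ (Finset.mem_filter.2 ⟨Finset.mem_univ m, Nat.lt_succ_self _⟩)
      obtain ⟨p, hp, hpe⟩ := Finset.mem_image.1 h1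
      have hpv : (p:ℕ) < (m:ℕ)+1 := (Finset.mem_filter.1 hp).2
      rcases Nat.lt_succ_iff_lt_or_eq.1 hpv with hlt | heqv
      · exfalso
        have h2 : σ' p ∈ (Finset.univ.filter (fun m' : Fin k => (m':ℕ) < (m:ℕ))).image σ' :=
          Finset.mem_image_of_mem σ' (Finset.mem_filter.2 ⟨Finset.mem_univ p, hlt⟩)
        rw [← heq _ (le_of_lt m.isLt)] at h2
        obtain ⟨q, hq2, hqe⟩ := Finset.mem_image.1 h2
        rw [hpe] at hqe
        have hqm : q = m := σ.injective hqe
        rw [hqm] at hq2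
        exact absurd (Finset.mem_filter.1 hq2).2 (lt_irrefl _)
      · rw [show p = m from Fin.ext heqv] at hpe
        exact hpe.symm
    have hcard := Fintype.card_le_of_injective _ hinj
    simp only [Fintype.card_perm, Fintype.card_fin, Fintype.card_finset] at hcard
    omega
  · push_neg at hT
    obtain ⟨σ, hσ⟩ := hT
    exact redcube hσ

lemma pow_le_exp_mul_factorial (k : ℕ) : (k:ℝ)^k ≤ Real.exp k * k.factorial := by
  induction k with
  | zero => simp
  | succ k ih =>
    rcases Nat.eq_zero_or_pos k with rfl | hk
    · simpa using Real.one_le_exp (by norm_num : (0:ℝ) ≤ 1)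
    · have hk0 : (0:ℝ) < k := by exact_mod_cast hk
      have h1 : ((k:ℝ)+1) ≤ k * Real.exp (1/k) := by
        have h := Real.add_one_le_exp (1/(k:ℝ))
        have := mul_le_mul_of_nonneg_left h (le_of_lt hk0)
        calc ((k:ℝ)+1) = k * (1/k + 1) := by field_simp; ring
        _ ≤ k * Real.exp (1/k) := this
      have h2 : ((k:ℝ)+1)^k ≤ ((k:ℝ) * Real.exp (1/k))^k :=
        pow_le_pow_left₀ (by positivity) h1 k
      have h3 : ((k:ℝ) * Real.exp (1/k))^k = (k:ℝ)^k * Real.exp 1 := by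
        rw [mul_pow, ← Real.exp_nat_mul]
        congr 2
        field_simp
      have h4 : ((k:ℝ)+1)^(k+1) ≤ ((k:ℝ)+1) * ((k:ℝ)^k * Real.exp 1) := by
        rw [pow_succ]
        calc ((k:ℝ)+1)^k * ((k:ℝ)+1) ≤ ((k:ℝ)^k * Real.exp 1) * ((k:ℝ)+1) := by
              apply mul_le_mul_of_nonneg_right _ (by positivity)
              rw [← h3]; exact h2
        _ = ((k:ℝ)+1) * ((k:ℝ)^k * Real.exp 1) := by ring
      calc ((k+1:ℕ):ℝ)^(k+1) = ((k:ℝ)+1)^(k+1) := by push_cast; ring_nf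
      _ ≤ ((k:ℝ)+1) * ((k:ℝ)^k * Real.exp 1) := h4
      _ ≤ ((k:ℝ)+1) * ((Real.exp k * k.factorial) * Real.exp 1) := by
            apply mul_le_mul_of_nonneg_left _ (by positivity)
            exact mul_le_mul_of_nonneg_right ih (le_of_lt (Real.exp_pos 1))
      _ = Real.exp (k+1) * (((k:ℝ)+1) * k.factorial) := by
            rw [Real.exp_add]; ring
      _ = Real.exp ((k+1:ℕ)) * ((k+1).factorial) := by
            push_cast [Nat.factorial_succ]; ring_nf

lemma two_pow_lt_factorial {n k : ℕ} (hk : 1 ≤ k)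
    (h : (n:ℝ) * Real.log 2 < k * (Real.log k - 1)) : 2^n < k.factorial := by
  have hk0 : (0:ℝ) < k := by exact_mod_cast hk
  have h1 : (2:ℝ)^n < (k:ℝ)^k / Real.exp k := by
    have e1 : (2:ℝ)^n = Real.exp (n * Real.log 2) := by
      rw [Real.exp_nat_mul, Real.exp_log two_pos]
    have e2 : (k:ℝ)^k / Real.exp k = Real.exp ((k:ℝ) * (Real.log k - 1)) := by
      rw [mul_sub, Real.exp_sub, mul_one]
      congr 1
      rw [Real.exp_nat_mul, Real.exp_log hk0]
    rw [e1, e2]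
    exact Real.exp_lt_exp.2 h
  have h2 : (k:ℝ)^k / Real.exp k ≤ k.factorial := by
    rw [div_le_iff₀ (Real.exp_pos _)]
    calc (k:ℝ)^k ≤ Real.exp k * k.factorial := pow_le_exp_mul_factorial k
    _ = (k.factorial : ℝ) * Real.exp k := by ring
  have : (2:ℝ)^n < (k.factorial : ℝ) := lt_of_lt_of_le h1 h2
  exact_mod_cast this

set_option maxHeartbeats 1000000 in
lemma numeric_choice (ε : ℝ) (hε : ε > 0) :
    ∃ n0 : ℕ, 2 ≤ n0 ∧ ∀ n : ℕ, n ≥ n0 → ∃ k : ℕ,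
      2^n < k.factorial ∧ (k:ℝ) ≤ (1+ε) * ((n:ℝ) / Real.logb 2 (n:ℝ)) := by
  obtain ⟨ε', hε'def⟩ : ∃ x : ℝ, x = ε/2 := ⟨_, rfl⟩
  have hε' : 0 < ε' := by rw [hε'def]; positivity
  obtain ⟨M, hM⟩ : ∃ x : ℝ, x = max (12/ε) (max ((3*(1+ε')/ε')^2) 9) := ⟨_, rfl⟩
  refine ⟨⌈Real.exp M⌉₊ + 2, by omega, ?_⟩
  intro n hn
  have hnpos : (0:ℝ) < n := by
    have : 2 ≤ n := by omega
    exact_mod_cast Nat.lt_of_lt_of_le (by norm_num) this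
  have hnR : Real.exp M ≤ (n:ℝ) := by
    calc Real.exp M ≤ (⌈Real.exp M⌉₊ : ℝ) := Nat.le_ceil _
    _ ≤ (n:ℝ) := by exact_mod_cast le_trans (by omega) hn
  obtain ⟨L, hLdef⟩ : ∃ x : ℝ, x = Real.log n := ⟨_, rfl⟩
  have hL : M ≤ L := hLdef ▸ (Real.le_log_iff_exp_le hnpos).2 hnR
  rw [hM] at hL
  have hL9 : (9:ℝ) ≤ L := le_trans (le_trans (le_max_right _ _) (le_max_right _ _)) hL
  have hL12 : 12/ε ≤ L := le_trans (le_max_left _ _) hL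
  have hLsq : (3*(1+ε')/ε')^2 ≤ L := le_trans (le_trans (le_max_left _ _) (le_max_right _ _)) hL
  have hLpos : (0:ℝ) < L := by linarith
  have hlog2 : (0.6931471803:ℝ) < Real.log 2 := Real.log_two_gt_d9
  have hlog2' : Real.log 2 < 1 := by
    have := Real.log_two_lt_d9; linarith
  have hlog2pos : (0:ℝ) < Real.log 2 := by linarith
  -- sqrt facts
  have hsqL : Real.sqrt L * Real.sqrt L = L := Real.mul_self_sqrt (le_of_lt hLpos)
  have hsq3 : (3:ℝ) ≤ Real.sqrt L := by
    rw [show (3:ℝ) = Real.sqrt 9 by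
      rw [show (9:ℝ) = 3^2 by norm_num, Real.sqrt_sq (by norm_num)]]
    exact Real.sqrt_le_sqrt hL9
  have hsqe : 3*(1+ε')/ε' ≤ Real.sqrt L := by
    rw [show 3*(1+ε')/ε' = Real.sqrt ((3*(1+ε')/ε')^2) by
      rw [Real.sqrt_sq (by positivity)]]
    exact Real.sqrt_le_sqrt hLsq
  have hlogL : Real.log L ≤ 2 * Real.sqrt L - 2 := by
    have h1 : Real.log (Real.sqrt L) ≤ Real.sqrt L - 1 :=
      Real.log_le_sub_one_of_pos (Real.sqrt_pos.2 hLpos)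
    have h2 : Real.log (Real.sqrt L) = Real.log L / 2 := Real.log_sqrt (le_of_lt hLpos)
    linarith
  -- c0 = log (log 2) ≥ -1
  obtain ⟨c0, hc0def⟩ : ∃ x : ℝ, x = Real.log (Real.log 2) := ⟨_, rfl⟩
  have hc0 : -1 ≤ c0 := by
    have h1 : Real.exp (-1) ≤ Real.log 2 := by
      rw [Real.exp_neg]
      have h2 : (2.7182818283:ℝ) < Real.exp 1 := Real.exp_one_gt_d9
      have h3 : (Real.exp 1)⁻¹ ≤ (2.7182818283:ℝ)⁻¹ := by
        apply inv_anti₀ (by norm_num) (le_of_lt h2)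
      calc (Real.exp 1)⁻¹ ≤ (2.7182818283:ℝ)⁻¹ := h3
      _ ≤ Real.log 2 := by
            have hd : ((2.7182818283:ℝ))⁻¹ ≤ 0.6931471803 := by norm_num
            linarith only [hd, hlog2]
    calc (-1:ℝ) = Real.log (Real.exp (-1)) := (Real.log_exp _).symm
    _ ≤ c0 := hc0def ▸ Real.log_le_log (Real.exp_pos _) h1
  -- the quantity Q
  have hlogb : Real.logb 2 (n:ℝ) = L / Real.log 2 := by rw [Real.logb, hLdef]
  obtain ⟨Q, hQdef⟩ : ∃ x : ℝ, x = (n:ℝ) / Real.logb 2 (n:ℝ) := ⟨_, rfl⟩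
  have hQ : Q = (n:ℝ) * Real.log 2 / L := by
    rw [hQdef, hlogb, div_div_eq_mul_div]
  -- n ≥ L^2/4
  have hnL : L^2/4 ≤ (n:ℝ) := by
    have h1 : Real.exp (L/2) ≥ 1 + L/2 := by
      have := Real.add_one_le_exp (L/2); linarith
    have h2 : Real.exp L = Real.exp (L/2) * Real.exp (L/2) := by
      rw [← Real.exp_add]; ring_nf
    have h3 : Real.exp L = (n:ℝ) := by rw [hLdef, Real.exp_log hnpos]
    nlinarith only [h1, h2, h3, Real.exp_pos (L/2), hLpos]
  have hQL : L/6 ≤ Q := by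
    rw [hQ]
    rw [div_le_div_iff₀ (by norm_num) hLpos]
    nlinarith only [hnL, hlog2, hLpos]
  have hQpos : (0:ℝ) < Q := by linarith
  have hQ2 : 2/ε ≤ Q := by
    have h12 : (12:ℝ)/ε = 6*(2/ε) := by ring
    linarith
  -- define k
  obtain ⟨r, hrdef⟩ : ∃ x : ℝ, x = (1+ε') * Q := ⟨_, rfl⟩
  have hrpos : (0:ℝ) < r := by rw [hrdef]; positivity
  obtain ⟨k, hkdef⟩ : ∃ m : ℕ, m = ⌈r⌉₊ := ⟨_, rfl⟩
  have hkr : r ≤ (k:ℝ) := hkdef ▸ Nat.le_ceil r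
  have hkup : (k:ℝ) < r + 1 := hkdef ▸ Nat.ceil_lt_add_one (le_of_lt hrpos)
  have hQ1 : (1:ℝ) ≤ Q := by linarith
  have hQr : Q ≤ r := by rw [hrdef]; exact le_mul_of_one_le_left (le_of_lt hQpos) (by linarith)
  have hk1 : 1 ≤ k := by
    have h1 : (1:ℝ) ≤ (k:ℝ) := le_trans (le_trans hQ1 hQr) hkr
    exact_mod_cast h1
  refine ⟨k, ?_, ?_⟩
  · -- 2^n < k!
    apply two_pow_lt_factorial hk1
    have hkRpos : (0:ℝ) < (k:ℝ) := by
      have : (0:ℕ) < k := hk1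
      exact_mod_cast this
    have hlogk : L - Real.log L + c0 ≤ Real.log k := by
      have h1 : Real.log r ≤ Real.log k := Real.log_le_log hrpos hkr
      have h2 : Real.log r = Real.log (1+ε') + Real.log Q := by
        rw [hrdef, Real.log_mul (by positivity) (ne_of_gt hQpos)]
      have h3 : Real.log Q = L + c0 - Real.log L := by
        rw [hQ, Real.log_div (by positivity) (ne_of_gt hLpos),
          Real.log_mul (ne_of_gt hnpos) (ne_of_gt hlog2pos), ← hLdef, hc0def]
      have h4 : 0 ≤ Real.log (1+ε') := Real.log_nonneg (by linarith)
      linarith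
    obtain ⟨D, hDdef⟩ : ∃ x : ℝ, x = L - Real.log L + c0 := ⟨_, rfl⟩
    have h8 : 3*Real.sqrt L ≤ L := by
      calc 3*Real.sqrt L ≤ Real.sqrt L * Real.sqrt L :=
            mul_le_mul_of_nonneg_right hsq3 (Real.sqrt_nonneg L)
      _ = L := hsqL
    have hD4 : 4 ≤ D := by rw [hDdef]; linarith
    have hmain : (n:ℝ) * Real.log 2 < r * (D - 1) := by
      have hfrac : 0 < (n:ℝ) * Real.log 2 / L := by positivity
      have h5 : 3*(1+ε') ≤ ε' * Real.sqrt L := by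
        rw [div_le_iff₀ hε'] at hsqe
        linarith
      have h7 : 3*(1+ε')*Real.sqrt L ≤ ε' * L := by
        calc 3*(1+ε')*Real.sqrt L ≤ (ε' * Real.sqrt L) * Real.sqrt L :=
              mul_le_mul_of_nonneg_right h5 (Real.sqrt_nonneg L)
        _ = ε' * L := by rw [mul_assoc, hsqL]
      have hD' : L - 2*Real.sqrt L ≤ D - 1 := by rw [hDdef]; linarith
      have hgoal : L < (1+ε') * (D - 1) := by nlinarith only [hD', h7, hsq3, hε', hsqL, hLpos]
      calc (n:ℝ) * Real.log 2 = ((n:ℝ) * Real.log 2 / L) * L := by field_simp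
      _ < ((n:ℝ) * Real.log 2 / L) * ((1+ε') * (D-1)) := by
            exact mul_lt_mul_of_pos_left hgoal hfrac
      _ = r * (D - 1) := by rw [hrdef, hQ]; ring
    calc (n:ℝ) * Real.log 2 < r * (D - 1) := hmain
    _ ≤ (k:ℝ) * (Real.log k - 1) := by
          apply mul_le_mul hkr (by linarith) (by linarith) (le_of_lt hkRpos)
  · -- k ≤ (1+ε) Q
    rw [← hQdef]
    refine le_of_lt ?_
    calc (k:ℝ) < r + 1 := hkup
    _ ≤ (1+ε') * Q + (ε/2) * Q := by
          have : 1 ≤ (ε/2) * Q := by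
            rw [hε'def] at *
            calc (1:ℝ) = (ε/2) * (2/ε) := by field_simp
            _ ≤ (ε/2) * Q := by
                  apply mul_le_mul_of_nonneg_left hQ2 (by positivity)
          linarith
    _ = (1+ε) * Q := by rw [hε'def]; ring

end AuxAW

/-- For every `ε > 0` there is `n0` such that for all `n ≥ n0`,
`R(Λ, Q_n) ≤ n + (1 + ε) · (n / log n)` (log base 2). -/
theorem statement3 (ε : ℝ) (hε : ε > 0) :
    ∃ n0 : ℕ, ∀ n : ℕ, n ≥ n0 →
      (posetRamsey Lam n : ℝ) ≤ n + (1 + ε) * (n / Real.logb 2 n) := by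
  obtain ⟨n0, hn02, hmain⟩ := numeric_choice ε hε
  refine ⟨n0, fun n hn => ?_⟩
  obtain ⟨k, hfac, hkle⟩ := hmain n hn
  have hmem : (n + k) ∈ {N : ℕ | ∀ c : Finset (Fin N) → Bool,
      HasBlueCopy Lam c ∨ HasRedCube n c} := fun c => key n k hfac c
  have hR : posetRamsey Lam n ≤ n + k := Nat.sInf_le hmem
  have hRcast : (posetRamsey Lam n : ℝ) ≤ (n:ℝ) + (k:ℝ) := by exact_mod_cast hR
  exact hRcast.trans (add_le_add (le_refl _) hkle)
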